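/- Let $p>1$, $\epsilon>0$, $b_\epsilon(t) = t(t^2+\epsilon)^{(p-2)/2}$, and $B_\epsilon(t) = \int_0^t b_\epsilon(\tau)\,d\tau$. Define $C_p := 2^{1/(p-1)}$ if $1 < p < 2$ and $C_p := p$ if $p \ge 2$. Then for all $t > 0$: $t\, b_\epsilon(t/C_p) \le B_\epsilon(t)$. -/

import Mathlib

open Real

lemma aux_integral (p ε : ℝ) (hp : 1 < p) (hε : 0 < ε) (t : ℝ) :
    ∫ τ in (0:ℝ)..t, τ * (τ ^ 2 + ε) ^ ((p - 2) / 2)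
      = ((t ^ 2 + ε) ^ (p / 2) - ε ^ (p / 2)) / p := by
  have hp0 : (0:ℝ) < p := by linarith
  have hderiv : ∀ τ : ℝ, HasDerivAt (fun x : ℝ => (x ^ 2 + ε) ^ (p / 2) / p)
      (τ * (τ ^ 2 + ε) ^ ((p - 2) / 2)) τ := by
    intro τ
    have hpos : (0:ℝ) < τ ^ 2 + ε := by positivity
    have h1 : HasDerivAt (fun x : ℝ => x ^ 2 + ε) (2 * τ) τ := by
      simpa using ((hasDerivAt_pow 2 τ).add_const ε)
    have h2 : HasDerivAt (fun x : ℝ => (x ^ 2 + ε) ^ (p / 2))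
        (p / 2 * (τ ^ 2 + ε) ^ (p / 2 - 1) * (2 * τ)) τ :=
      by have := (Real.hasDerivAt_rpow_const (p := p / 2) (Or.inl hpos.ne')).comp τ h1; exact this
    have := h2.div_const p
    refine this.congr_deriv ?_
    rw [show p / 2 - 1 = (p - 2) / 2 by ring]
    field_simp
  have hcont : ContinuousOn (fun τ : ℝ => τ * (τ ^ 2 + ε) ^ ((p - 2) / 2))
      (Set.uIcc 0 t) := by
    apply ContinuousOn.mul continuousOn_id
    intro x _
    apply ContinuousAt.continuousWithinAt
    apply ContinuousAt.rpow_const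
    · exact (continuous_pow 2).continuousAt.add continuousAt_const
    · left; positivity
  rw [intervalIntegral.integral_eq_sub_of_hasDerivAt (fun τ _ => hderiv τ)
    (hcont.intervalIntegrable)]
  simp [sub_div]

lemma aux_bernoulli (p ε X : ℝ) (hp0 : 0 < p) (hp2 : p ≤ 2) (hε : 0 < ε) (hX : ε ≤ X) :
    p / 2 * (X - ε) * X ^ ((p - 2) / 2) ≤ X ^ (p / 2) - ε ^ (p / 2) := by
  have hXpos : (0:ℝ) < X := lt_of_lt_of_le hε hX
  set s : ℝ := ε / X - 1 with hs
  have hs1 : -1 ≤ s := by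
    have : 0 < ε / X := div_pos hε hXpos
    simp only [hs]; linarith
  have hkey : (1 + s) ^ (p / 2) ≤ 1 + p / 2 * s :=
    rpow_one_add_le_one_add_mul_self hs1 (by linarith) (by linarith)
  have h1s : 1 + s = ε / X := by simp [hs]
  rw [h1s] at hkey
  rw [Real.div_rpow hε.le hXpos.le] at hkey
  have hXp : (0:ℝ) < X ^ (p / 2) := Real.rpow_pos_of_pos hXpos _
  have hmul := mul_le_mul_of_nonneg_right hkey hXp.le
  rw [div_mul_cancel₀ _ hXp.ne'] at hmul
  have hexp : X ^ ((p - 2) / 2) = X ^ (p / 2) / X := by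
    rw [show (p - 2) / 2 = p / 2 - 1 by ring, Real.rpow_sub hXpos, Real.rpow_one]
  have hz : (1 + p / 2 * s) * X ^ (p / 2) - X ^ (p / 2) +
      p / 2 * (X - ε) * X ^ ((p - 2) / 2) = 0 := by
    rw [hexp, hs]
    field_simp
    ring
  nlinarith [hmul, hz]

theorem stmt_11 (p ε : ℝ) (hp : 1 < p) (hε : 0 < ε)
    (Cp : ℝ) (hCp : Cp = if p < 2 then (2 : ℝ) ^ (1 / (p - 1)) else p) :
    ∀ t : ℝ, 0 < t →
      t * ((t / Cp) * ((t / Cp) ^ 2 + ε) ^ ((p - 2) / 2)) ≤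
        ∫ τ in (0:ℝ)..t, τ * (τ ^ 2 + ε) ^ ((p - 2) / 2) := by
  intro t ht
  rw [aux_integral p ε hp hε t]
  have hp0 : (0:ℝ) < p := by linarith
  have hXpos : (0:ℝ) < t ^ 2 + ε := by positivity
  have hεX : ε ≤ t ^ 2 + ε := by nlinarith
  by_cases hplt : p < 2
  · -- Cp = 2 ^ (1/(p-1))
    rw [if_pos hplt] at hCp
    have hC1 : (1:ℝ) ≤ Cp := by
      rw [hCp]
      exact Real.one_le_rpow (by norm_num) (one_div_pos.mpr (by linarith)).le
    have hCpos : (0:ℝ) < Cp := by linarith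
    have hCpow : Cp ^ (p - 1) = 2 := by
      rw [hCp, ← Real.rpow_mul (by norm_num : (0:ℝ) ≤ 2), one_div,
        inv_mul_cancel₀ (by linarith : p - 1 ≠ 0), Real.rpow_one]
    have hCC : (0:ℝ) < Cp * Cp := by positivity
    have hbase : (t ^ 2 + ε) / (Cp * Cp) ≤ (t / Cp) ^ 2 + ε := by
      have h1 : (t / Cp) ^ 2 = t ^ 2 / (Cp * Cp) := by field_simp
      have h2 : ε / (Cp * Cp) ≤ ε := div_le_self hε.le (by nlinarith)
      have h3 : (t ^ 2 + ε) / (Cp * Cp) = t ^ 2 / (Cp * Cp) + ε / (Cp * Cp) := by ring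
      rw [h3, h1]
      linarith
    have hexpn : (p - 2) / 2 ≤ 0 := by linarith
    have hstep1 : ((t / Cp) ^ 2 + ε) ^ ((p - 2) / 2)
        ≤ ((t ^ 2 + ε) / (Cp * Cp)) ^ ((p - 2) / 2) :=
      Real.rpow_le_rpow_of_nonpos (by positivity) hbase hexpn
    have hsplit : ((t ^ 2 + ε) / (Cp * Cp)) ^ ((p - 2) / 2)
        = (t ^ 2 + ε) ^ ((p - 2) / 2) * Cp ^ (2 - p) := by
      rw [Real.div_rpow hXpos.le hCC.le]
      have hcc : Cp * Cp = Cp ^ (2:ℝ) := by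
        rw [show (2:ℝ) = 1 + 1 by norm_num, Real.rpow_add hCpos, Real.rpow_one]
      rw [hcc, ← Real.rpow_mul hCpos.le,
        show 2 * ((p - 2) / 2) = p - 2 by ring, div_eq_mul_inv,
        ← Real.rpow_neg hCpos.le, show -(p - 2) = 2 - p by ring]
    have hCinv : Cp ^ (2 - p) = Cp / 2 := by
      have h : Cp ^ (2 - p) = Cp ^ (1:ℝ) / Cp ^ (p - 1) := by
        rw [← Real.rpow_sub hCpos]; congr 1; ring
      rw [h, Real.rpow_one, hCpow]
    have hbern := aux_bernoulli p ε (t ^ 2 + ε) hp0 (by linarith) hε hεX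
    have hXe : (0:ℝ) ≤ (t ^ 2 + ε) ^ ((p - 2) / 2) := (Real.rpow_pos_of_pos hXpos _).le
    calc t * ((t / Cp) * ((t / Cp) ^ 2 + ε) ^ ((p - 2) / 2))
        ≤ t * ((t / Cp) * ((t ^ 2 + ε) ^ ((p - 2) / 2) * (Cp / 2))) := by
          have h := hstep1
          rw [hsplit, hCinv] at h
          have htC : (0:ℝ) < t / Cp := div_pos ht hCpos
          exact mul_le_mul_of_nonneg_left (mul_le_mul_of_nonneg_left h htC.le) ht.le
      _ = p / 2 * (t ^ 2 + ε - ε) * (t ^ 2 + ε) ^ ((p - 2) / 2) / p := by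
          field_simp; ring
      _ ≤ ((t ^ 2 + ε) ^ (p / 2) - ε ^ (p / 2)) / p :=
          div_le_div_of_nonneg_right hbern hp0.le
  · -- Cp = p, p ≥ 2
    rw [if_neg hplt] at hCp
    push_neg at hplt
    rw [hCp]
    have hexp : (0:ℝ) ≤ (p - 2) / 2 := by linarith
    have htp : 0 < t / p := div_pos ht hp0
    have hbase : (t / p) ^ 2 + ε ≤ t ^ 2 + ε := by
      have : t / p ≤ t := div_le_self ht.le (by linarith)
      nlinarith
    have hstep1 : ((t / p) ^ 2 + ε) ^ ((p - 2) / 2) ≤ (t ^ 2 + ε) ^ ((p - 2) / 2) :=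
      Real.rpow_le_rpow (by positivity) hbase hexp
    have hXsplit : (t ^ 2 + ε) ^ (p / 2) = (t ^ 2 + ε) * (t ^ 2 + ε) ^ ((p - 2) / 2) := by
      rw [show p / 2 = 1 + (p - 2) / 2 by ring, Real.rpow_add hXpos, Real.rpow_one]
    have hεsplit : ε ^ (p / 2) = ε * ε ^ ((p - 2) / 2) := by
      rw [show p / 2 = 1 + (p - 2) / 2 by ring, Real.rpow_add hε, Real.rpow_one]
    have hεle : ε ^ ((p - 2) / 2) ≤ (t ^ 2 + ε) ^ ((p - 2) / 2) :=
      Real.rpow_le_rpow hε.le hεX hexp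
    have hkey : t ^ 2 * (t ^ 2 + ε) ^ ((p - 2) / 2) ≤ (t ^ 2 + ε) ^ (p / 2) - ε ^ (p / 2) := by
      rw [hXsplit, hεsplit]
      nlinarith
    rw [le_div_iff₀ hp0]
    have hXe : (0:ℝ) ≤ (t ^ 2 + ε) ^ ((p - 2) / 2) := (Real.rpow_pos_of_pos hXpos _).le
    calc t * ((t / p) * ((t / p) ^ 2 + ε) ^ ((p - 2) / 2)) * p
        = t ^ 2 * ((t / p) ^ 2 + ε) ^ ((p - 2) / 2) := by field_simp
      _ ≤ t ^ 2 * (t ^ 2 + ε) ^ ((p - 2) / 2) := by nlinarith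
      _ ≤ (t ^ 2 + ε) ^ (p / 2) - ε ^ (p / 2) := hkey
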